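/- For m even binary sources [X1;...;Xm] = L·[Y1;...;Ym] with L the lower-triangular all-ones matrix, the Yi independent, Y_i ~ Bernoulli(1/2) for i odd and Y_i ~ Bernoulli(p) for i even (0 < p < 1/2), any achievable rate tuple (R1,...,Rm) for distributed lossless computation of Z = X1 + ... + Xm (mod 2) satisfies R_i ≥ h(p) for every i, hence the sum rate is at least m·h(p). -/

import Mathlib

open scoped BigOperators

/-- Binary entropy function (in bits). -/
noncomputable def binH (p : ℝ) : ℝ :=
  -(p * Real.logb 2 p) - (1 - p) * Real.logb 2 (1 - p)

open Classical in
/-- `AchievableRate P g R` : the rate tuple `R` is achievable for distributed lossless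
computation of the function `g` of `m` memoryless sources with joint per-symbol pmf `P`:
for every rate slack `δ > 0` and error tolerance `ε > 0` there are a blocklength `n`,
separate encoders (one per source, of rates at most `R i + δ` bits/symbol) and a
decoder whose probability of failing to recover the `n` function values is at most `ε`. -/
def AchievableRate {m : ℕ} {α β : Type*} [Fintype α] [Fintype β]
    (P : (Fin m → α) → ℝ) (g : (Fin m → α) → β) (R : Fin m → ℝ) : Prop :=
  ∀ δ : ℝ, 0 < δ → ∀ ε : ℝ, 0 < ε →
    ∃ n : ℕ, 0 < n ∧ ∃ M : Fin m → ℕ,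
      (∀ i, Real.logb 2 (M i) / n ≤ R i + δ) ∧
      ∃ enc : ∀ i : Fin m, (Fin n → α) → Fin (M i),
      ∃ dec : (∀ i : Fin m, Fin (M i)) → (Fin n → β),
        (∑ x ∈ Finset.univ.filter
            (fun x : Fin n → (Fin m → α) =>
              dec (fun i => enc i (fun t => x t i)) ≠ fun t => g (x t)),
          ∏ t, P (x t)) ≤ ε

/-- The pmf of a `Bernoulli(p)` random variable with values in `F_2`. -/
noncomputable def bern (p : ℝ) (b : ZMod 2) : ℝ := if b = 1 then p else 1 - p

open Finset Real

namespace St18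

lemma bern_pos {p : ℝ} (hp : 0 < p) (hp1 : p < 1) (b : ZMod 2) : 0 < bern p b := by
  unfold bern; split <;> linarith

lemma sum_zmod2 (F : ZMod 2 → ℝ) : ∑ b, F b = F 0 + F 1 := by
  have h : (Finset.univ : Finset (ZMod 2)) = {0, 1} := by decide
  rw [h, Finset.sum_insert (by decide), Finset.sum_singleton]

lemma sum_bern (c : ℝ) : ∑ b : ZMod 2, bern c b = 1 := by
  rw [sum_zmod2]
  show (if (0 : ZMod 2) = 1 then c else 1 - c) + (if (1 : ZMod 2) = 1 then c else 1 - c) = 1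
  rw [if_neg (by decide), if_pos rfl]; ring

lemma sum_prod_fn {ι α : Type*} [Fintype ι] [DecidableEq ι] [Fintype α] (F : ι → α → ℝ) :
    ∑ u : ι → α, ∏ t, F t (u t) = ∏ t, ∑ a, F t a := (Fintype.prod_sum F).symm

noncomputable def fb (p : ℝ) (b : ZMod 2) : ℝ := -Real.logb 2 (bern p b)

noncomputable def Vr (p : ℝ) : ℝ := ∑ b : ZMod 2, bern p b * (fb p b - binH p) ^ 2

lemma Vr_nonneg (p : ℝ) (hp : 0 < p) (hp1 : p < 1) : 0 ≤ Vr p :=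
  Finset.sum_nonneg fun b _ => mul_nonneg (bern_pos hp hp1 b).le (sq_nonneg _)

lemma mean_fb {p : ℝ} : ∑ b : ZMod 2, bern p b * fb p b = binH p := by
  rw [sum_zmod2]
  show (if (0 : ZMod 2) = 1 then p else 1 - p) * fb p 0
      + (if (1 : ZMod 2) = 1 then p else 1 - p) * fb p 1 = binH p
  rw [if_neg (by decide), if_pos rfl]
  show (1 - p) * -Real.logb 2 (bern p 0) + p * -Real.logb 2 (bern p 1) = binH p
  unfold bern binH
  rw [if_neg (by decide), if_pos rfl]; ring

lemma q_eq_rpow {p : ℝ} (hp : 0 < p) (hp1 : p < 1) {n : ℕ} (u : Fin n → ZMod 2) :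
    ∏ t, bern p (u t) = (2 : ℝ) ^ (-(∑ t, fb p (u t))) := by
  rw [show -(∑ t, fb p (u t)) = ∑ t, -(fb p (u t)) by rw [Finset.sum_neg_distrib],
    Real.rpow_sum_of_pos (by norm_num)]
  refine Finset.prod_congr rfl fun t _ => ?_
  rw [fb, neg_neg, Real.rpow_logb (by norm_num) (by norm_num) (bern_pos hp hp1 _)]


lemma second_moment {p : ℝ} (hp : 0 < p) (hp1 : p < 1) {n : ℕ} :
    ∑ u : Fin n → ZMod 2, (∏ t, bern p (u t)) * (∑ t, (fb p (u t) - binH p)) ^ 2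
      = n * Vr p := by
  set g : ZMod 2 → ℝ := fun b => fb p b - binH p with hg
  have hmean : ∑ b : ZMod 2, bern p b * g b = 0 := by
    simp only [hg, mul_sub, Finset.sum_sub_distrib, mean_fb, ← Finset.sum_mul, sum_bern,
      one_mul, sub_self]
  have key : ∀ t s : Fin n, ∑ u : Fin n → ZMod 2, (∏ t', bern p (u t')) * (g (u t) * g (u s))
      = if t = s then Vr p else 0 := by
    intro t s
    have hrw : ∀ u : Fin n → ZMod 2, (∏ t', bern p (u t')) * (g (u t) * g (u s))
        = ∏ t', (bern p (u t') * (if t' = t then g (u t') else 1)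
            * (if t' = s then g (u t') else 1)) := by
      intro u
      rw [Finset.prod_mul_distrib, Finset.prod_mul_distrib]
      rw [Finset.prod_ite_eq' Finset.univ t (fun t' => g (u t')),
        Finset.prod_ite_eq' Finset.univ s (fun t' => g (u t'))]
      simp [mul_assoc]
    rw [Finset.sum_congr rfl fun u _ => hrw u]
    rw [sum_prod_fn (fun t' b => (bern p b * if t' = t then g b else 1) * if t' = s then g b else 1)]
    by_cases hts : t = s
    · subst hts
      rw [if_pos rfl]
      rw [Finset.prod_eq_single_of_mem t (Finset.mem_univ t)
        (fun s' _ hs' => by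
          simp only [if_neg hs']
          simpa using sum_bern p)]
      unfold Vr
      refine Finset.sum_congr rfl fun b _ => ?_
      simp only [eq_self_iff_true, if_true, hg]
      ring
    · rw [if_neg hts]
      refine Finset.prod_eq_zero (Finset.mem_univ t) ?_
      simp only [eq_self_iff_true, if_true, if_neg hts, mul_one]
      exact hmean
  calc ∑ u : Fin n → ZMod 2, (∏ t, bern p (u t)) * (∑ t, g (u t)) ^ 2
      = ∑ u : Fin n → ZMod 2, ∑ t, ∑ s, (∏ t', bern p (u t')) * (g (u t) * g (u s)) := by
        refine Finset.sum_congr rfl fun u _ => ?_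
        rw [sq, Finset.sum_mul_sum, Finset.mul_sum]
        refine Finset.sum_congr rfl fun t _ => ?_
        rw [Finset.mul_sum]
    _ = ∑ t, ∑ s : Fin n, ∑ u : Fin n → ZMod 2, (∏ t', bern p (u t')) * (g (u t) * g (u s)) := by
        rw [Finset.sum_comm]
        refine Finset.sum_congr rfl fun t _ => Finset.sum_comm
    _ = ∑ t : Fin n, ∑ s : Fin n, if t = s then Vr p else 0 := by
        exact Finset.sum_congr rfl fun t _ => Finset.sum_congr rfl fun s _ => key t s
    _ = n * Vr p := by simp [Finset.sum_ite_eq]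

lemma cheb {p : ℝ} (hp : 0 < p) (hp1 : p < 1) {n : ℕ} (hn : 0 < n) {d : ℝ} (hd : 0 < d) :
    ∑ u ∈ Finset.univ.filter
        (fun u : Fin n → ZMod 2 => ∑ t, fb p (u t) ≤ n * binH p - n * d),
      ∏ t, bern p (u t) ≤ Vr p / (n * d ^ 2) := by
  have hq : ∀ u : Fin n → ZMod 2, 0 ≤ ∏ t, bern p (u t) :=
    fun u => Finset.prod_nonneg fun t _ => (bern_pos hp hp1 _).le
  have hnd : 0 < (n : ℝ) * d := by positivity
  have step1 : ∀ u ∈ Finset.univ.filter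
      (fun u : Fin n → ZMod 2 => ∑ t, fb p (u t) ≤ n * binH p - n * d),
      ∏ t, bern p (u t) ≤ (∏ t, bern p (u t))
        * ((∑ t, (fb p (u t) - binH p)) / ((n : ℝ) * d)) ^ 2 := by
    intro u hu
    rw [Finset.mem_filter] at hu
    have h1 : ∑ t, (fb p (u t) - binH p) ≤ -((n : ℝ) * d) := by
      rw [Finset.sum_sub_distrib, Finset.sum_const, Finset.card_univ, Fintype.card_fin,
        nsmul_eq_mul]
      linarith [hu.2]
    have h2 : (1 : ℝ) ≤ ((∑ t, (fb p (u t) - binH p)) / ((n : ℝ) * d)) ^ 2 := by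
      rw [div_pow, le_div_iff₀ (by positivity), one_mul]
      have h3 : ((n : ℝ) * d) ^ 2 ≤ (-(∑ t, (fb p (u t) - binH p))) ^ 2 :=
        sq_le_sq' (by linarith) (by linarith)
      calc ((n : ℝ) * d) ^ 2 ≤ (-(∑ t, (fb p (u t) - binH p))) ^ 2 := h3
        _ = (∑ t, (fb p (u t) - binH p)) ^ 2 := by ring
    calc ∏ t, bern p (u t) = (∏ t, bern p (u t)) * 1 := (mul_one _).symm
      _ ≤ _ := mul_le_mul_of_nonneg_left h2 (hq u)
  calc ∑ u ∈ Finset.univ.filter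
        (fun u : Fin n → ZMod 2 => ∑ t, fb p (u t) ≤ n * binH p - n * d),
      ∏ t, bern p (u t)
      ≤ ∑ u ∈ Finset.univ.filter
          (fun u : Fin n → ZMod 2 => ∑ t, fb p (u t) ≤ n * binH p - n * d),
        (∏ t, bern p (u t)) * ((∑ t, (fb p (u t) - binH p)) / ((n : ℝ) * d)) ^ 2 :=
        Finset.sum_le_sum step1
    _ ≤ ∑ u : Fin n → ZMod 2,
        (∏ t, bern p (u t)) * ((∑ t, (fb p (u t) - binH p)) / ((n : ℝ) * d)) ^ 2 :=
        Finset.sum_le_sum_of_subset_of_nonneg (Finset.filter_subset _ _)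
          (fun u _ _ => mul_nonneg (hq u) (sq_nonneg _))
    _ = (∑ u : Fin n → ZMod 2, (∏ t, bern p (u t)) * (∑ t, (fb p (u t) - binH p)) ^ 2)
        / ((n : ℝ) * d) ^ 2 := by
        rw [Finset.sum_div]
        refine Finset.sum_congr rfl fun u _ => ?_
        rw [div_pow]; ring
    _ = (n : ℝ) * Vr p / ((n : ℝ) * d) ^ 2 := by rw [second_moment hp hp1]
    _ = Vr p / ((n : ℝ) * d ^ 2) := by
        field_simp

variable {k : ℕ}

lemma zmod2_add_add (a b : ZMod 2) : a + b + b = a := by revert a b; decide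
lemma zmod2_add_left (b a : ZMod 2) : b + (a + b) = a := by revert a b; decide

variable {k : ℕ}

/-- per-symbol factor `j` of the joint pmf -/
noncomputable def fct (p : ℝ) (v : Fin (2 * k) → ZMod 2) (j : Fin (2 * k)) : ℝ :=
  bern (if (j : ℕ) % 2 = 0 then 1 / 2 else p)
    (if hj : (j : ℕ) = 0 then v j else v j + v ⟨(j : ℕ) - 1, by have := j.isLt; omega⟩)

noncomputable def Psym (p : ℝ) (v : Fin (2 * k) → ZMod 2) : ℝ := ∏ j, fct p v j

/-- the neighbour column of `i` whose sum with column `i` is `Bern(p)` -/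
def nbr (i : Fin (2 * k)) : Fin (2 * k) :=
  if _ : (i : ℕ) % 2 = 0 then ⟨(i : ℕ) + 1, by have := i.isLt; omega⟩
  else ⟨(i : ℕ) - 1, by have := i.isLt; omega⟩

lemma nbr_ne (i : Fin (2 * k)) : nbr i ≠ i := by
  unfold nbr
  split <;> (apply Fin.ne_of_val_ne; simp only []; omega)

/-- the odd factor index attached to column `i` -/
def jst (i : Fin (2 * k)) : Fin (2 * k) :=
  if (i : ℕ) % 2 = 0 then nbr i else i

/-- reconstruct a symbol from the value `u` relevant to column `i` and the rest `r` -/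
def xs (i : Fin (2 * k)) (u : ZMod 2) (r : {j : Fin (2 * k) // j ≠ i} → ZMod 2) :
    Fin (2 * k) → ZMod 2 :=
  fun j => if h : j = i then u + r ⟨nbr i, nbr_ne i⟩ else r ⟨j, h⟩

lemma xs_ne {i : Fin (2 * k)} (u u' : ZMod 2) (r : {j : Fin (2 * k) // j ≠ i} → ZMod 2)
    {j : Fin (2 * k)} (h : j ≠ i) : xs i u r j = xs i u' r j := by
  simp [xs, dif_neg h]

lemma fct_jst {p : ℝ} (i : Fin (2 * k)) (u : ZMod 2)
    (r : {j : Fin (2 * k) // j ≠ i} → ZMod 2) :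
    fct p (xs i u r) (jst i) = bern p u := by
  unfold fct jst
  by_cases h : (i : ℕ) % 2 = 0
  · rw [if_pos h]
    have hnbr : (nbr i : ℕ) = (i : ℕ) + 1 := by unfold nbr; rw [dif_pos h]
    have h0 : ¬ ((nbr i : ℕ) = 0) := by omega
    rw [dif_neg h0]
    have hprev : (⟨(nbr i : ℕ) - 1, by have := (nbr i).isLt; omega⟩ : Fin (2 * k)) = i := by
      apply Fin.ext; simp [hnbr]
    have hw : ¬ ((nbr i : ℕ) % 2 = 0) := by omega
    rw [if_neg hw, hprev]
    have h1 : xs i u r (nbr i) = r ⟨nbr i, nbr_ne i⟩ := by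
      simp [xs, dif_neg (nbr_ne i)]
    have h2 : xs i u r i = u + r ⟨nbr i, nbr_ne i⟩ := by simp [xs]
    rw [h1, h2, zmod2_add_left]
  · rw [if_neg h]
    have hi1 : (i : ℕ) % 2 = 1 := Nat.mod_two_eq_zero_or_one _ |>.resolve_left h
    have h0 : ¬ ((i : ℕ) = 0) := by omega
    rw [dif_neg h0, if_neg h]
    have hprev : (⟨(i : ℕ) - 1, by have := i.isLt; omega⟩ : Fin (2 * k)) = nbr i := by
      apply Fin.ext; unfold nbr; rw [dif_neg h]
    have h2 : xs i u r i = u + r ⟨nbr i, nbr_ne i⟩ := by simp [xs]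
    rw [hprev, h2]
    have h1 : xs i u r (nbr i) = r ⟨nbr i, nbr_ne i⟩ := by
      simp [xs, dif_neg (nbr_ne i)]
    rw [h1, zmod2_add_add]

lemma bern_half (b : ZMod 2) : bern (1 / 2) b = 1 / 2 := by
  unfold bern; split <;> norm_num

lemma fct_ne_jst {p : ℝ} (i : Fin (2 * k)) (u : ZMod 2)
    (r : {j : Fin (2 * k) // j ≠ i} → ZMod 2) {j : Fin (2 * k)} (hj : j ≠ jst i) :
    fct p (xs i u r) j = fct p (xs i 0 r) j := by
  by_cases hw : (j : ℕ) % 2 = 0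
  · unfold fct; rw [if_pos hw, bern_half, bern_half]
  · -- j has odd index; show columns j and j-1 differ from i
    have hj1 : (j : ℕ) % 2 = 1 := Nat.mod_two_eq_zero_or_one _ |>.resolve_left hw
    have hji : j ≠ i := by
      intro hcontra
      by_cases h : (i : ℕ) % 2 = 0
      · rw [hcontra] at hj1; omega
      · exact hj (by rw [hcontra, jst, if_neg h])
    have h0 : ¬ ((j : ℕ) = 0) := by omega
    have hprev : (⟨(j : ℕ) - 1, by have := j.isLt; omega⟩ : Fin (2 * k)) ≠ i := by
      intro hcontra
      have hval : (j : ℕ) - 1 = (i : ℕ) := by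
        have := congrArg Fin.val hcontra; simpa using this
      by_cases h : (i : ℕ) % 2 = 0
      · apply hj
        apply Fin.ext
        rw [jst, if_pos h]
        unfold nbr; rw [dif_pos h]
        simp only [Fin.val_mk]; omega
      · have hi1 : (i : ℕ) % 2 = 1 := Nat.mod_two_eq_zero_or_one _ |>.resolve_left h
        omega
    unfold fct
    rw [dif_neg h0, dif_neg h0, xs_ne u 0 r hji, xs_ne u 0 r hprev]

noncomputable def Brest (p : ℝ) (i : Fin (2 * k)) (r : {j : Fin (2 * k) // j ≠ i} → ZMod 2) :
    ℝ := ∏ j ∈ Finset.univ.erase (jst i), fct p (xs i 0 r) j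

lemma Psym_xs {p : ℝ} (i : Fin (2 * k)) (u : ZMod 2)
    (r : {j : Fin (2 * k) // j ≠ i} → ZMod 2) :
    Psym p (xs i u r) = bern p u * Brest p i r := by
  unfold Psym Brest
  rw [← Finset.mul_prod_erase _ _ (Finset.mem_univ (jst i)), fct_jst]
  congr 1
  exact Finset.prod_congr rfl fun j hj => fct_ne_jst i u r (Finset.mem_erase.mp hj).1


/-- the triangular change of variables `X → Y` on one symbol -/
def dmap (v : Fin (2 * k) → ZMod 2) : Fin (2 * k) → ZMod 2 :=
  fun j => if hj : (j : ℕ) = 0 then v j else v j + v ⟨(j : ℕ) - 1, by have := j.isLt; omega⟩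

lemma dmap_injective : Function.Injective (dmap (k := k)) := by
  intro v v' h
  have key : ∀ a : ℕ, ∀ ha : a < 2 * k, v ⟨a, ha⟩ = v' ⟨a, ha⟩ := by
    intro a
    induction a using Nat.strong_induction_on with
    | _ a IH =>
      intro ha
      have hcong := congrFun h ⟨a, ha⟩
      by_cases h0 : a = 0
      · subst h0
        simpa [dmap] using hcong
      · have h0' : ¬ ((⟨a, ha⟩ : Fin (2 * k)) : ℕ) = 0 := h0
        rw [dmap, dmap, dif_neg h0', dif_neg h0'] at hcong
        have hIH := IH (a - 1) (by omega) (by omega)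
        rw [hIH] at hcong
        exact add_right_cancel hcong
  funext j
  exact key j.1 j.2

lemma sum_Psym (p : ℝ) : ∑ v : Fin (2 * k) → ZMod 2, Psym p v = 1 := by
  have hbij : Function.Bijective (dmap (k := k)) :=
    Finite.injective_iff_bijective.mp dmap_injective
  have : ∑ v : Fin (2 * k) → ZMod 2, Psym p v
      = ∑ y : Fin (2 * k) → ZMod 2,
          ∏ j : Fin (2 * k), bern (if (j : ℕ) % 2 = 0 then 1 / 2 else p) (y j) :=
    Fintype.sum_bijective (dmap (k := k)) hbij _ _ (fun v => rfl)
  rw [this,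
    sum_prod_fn (fun (j : Fin (2 * k)) (b : ZMod 2) =>
      bern (if (j : ℕ) % 2 = 0 then 1 / 2 else p) b)]
  simp [sum_bern]

/-- the change of variables splitting off the relevant part of column `i` -/
def Er (i : Fin (2 * k)) (n : ℕ) :
    ((Fin n → ZMod 2) × ({j : Fin (2 * k) // j ≠ i} → Fin n → ZMod 2))
      ≃ (Fin n → Fin (2 * k) → ZMod 2) where
  toFun ur := fun t => xs i (ur.1 t) (fun j => ur.2 j t)
  invFun x := (fun t => x t i + x t (nbr i), fun j t => x t j.1)
  left_inv := by
    rintro ⟨u, r⟩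
    refine Prod.ext ?_ ?_
    · funext t
      show xs i (u t) (fun j => r j t) i + xs i (u t) (fun j => r j t) (nbr i) = u t
      rw [show xs i (u t) (fun j => r j t) i = u t + r ⟨nbr i, nbr_ne i⟩ t from by
          simp [xs],
        show xs i (u t) (fun j => r j t) (nbr i) = r ⟨nbr i, nbr_ne i⟩ t from by
          simp [xs, dif_neg (nbr_ne i)]]
      exact zmod2_add_add _ _
    · funext j t
      show xs i (u t) (fun j' => r j' t) j.1 = r j t
      rw [xs, dif_neg j.2]
  right_inv := by
    intro x
    funext t j
    show xs i (x t i + x t (nbr i)) _ j = x t j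
    by_cases h : j = i
    · subst h
      rw [xs, dif_pos rfl]
      exact zmod2_add_add _ _
    · rw [xs, dif_neg h]


lemma Er_apply (i : Fin (2 * k)) (n : ℕ) (u : Fin n → ZMod 2)
    (r : {j : Fin (2 * k) // j ≠ i} → Fin n → ZMod 2) :
    Er i n (u, r) = fun t => xs i (u t) (fun j => r j t) := rfl

lemma bern_nonneg {c : ℝ} (h0 : 0 ≤ c) (h1 : c ≤ 1) (b : ZMod 2) : 0 ≤ bern c b := by
  unfold bern; split <;> linarith

lemma bern_ge {p : ℝ} (hp : 0 < p) (hp2 : p < 1 / 2) (c : ℝ) (hc : c = 1 / 2 ∨ c = p)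
    (b : ZMod 2) : p ≤ bern c b := by
  unfold bern; rcases hc with h | h <;> subst h <;> split <;> linarith

lemma fct_nonneg {p : ℝ} (hp : 0 ≤ p) (hp1 : p ≤ 1) (v : Fin (2 * k) → ZMod 2)
    (j : Fin (2 * k)) : 0 ≤ fct p v j := by
  unfold fct
  split <;> exact bern_nonneg (by norm_num <;> linarith) (by norm_num <;> linarith) _

lemma fct_ge {p : ℝ} (hp : 0 < p) (hp2 : p < 1 / 2) (v : Fin (2 * k) → ZMod 2)
    (j : Fin (2 * k)) : p ≤ fct p v j := by
  unfold fct
  split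
  · exact bern_ge hp hp2 _ (Or.inl rfl) _
  · exact bern_ge hp hp2 _ (Or.inr rfl) _

lemma Psym_nonneg {p : ℝ} (hp : 0 ≤ p) (hp1 : p ≤ 1) (v : Fin (2 * k) → ZMod 2) :
    0 ≤ Psym p v := Finset.prod_nonneg fun j _ => fct_nonneg hp hp1 v j

lemma Psym_ge {p : ℝ} (hp : 0 < p) (hp2 : p < 1 / 2) (v : Fin (2 * k) → ZMod 2) :
    p ^ (2 * k) ≤ Psym p v := by
  unfold Psym
  calc p ^ (2 * k) = ∏ _j : Fin (2 * k), p := by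
        rw [Finset.prod_const, Finset.card_univ, Fintype.card_fin]
    _ ≤ ∏ j, fct p v j :=
        Finset.prod_le_prod (fun j _ => hp.le) (fun j _ => fct_ge hp hp2 v j)

lemma Brest_nonneg {p : ℝ} (hp : 0 ≤ p) (hp1 : p ≤ 1) (i : Fin (2 * k))
    (r : {j : Fin (2 * k) // j ≠ i} → ZMod 2) : 0 ≤ Brest p i r :=
  Finset.prod_nonneg fun j _ => fct_nonneg hp hp1 _ j

lemma sum_q (n : ℕ) (p : ℝ) : ∑ u : Fin n → ZMod 2, ∏ t, bern p (u t) = 1 := by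
  rw [sum_prod_fn (fun (_ : Fin n) (b : ZMod 2) => bern p b)]
  simp [sum_bern]

lemma total_one (n : ℕ) (p : ℝ) :
    ∑ x : Fin n → Fin (2 * k) → ZMod 2, ∏ t, Psym p (x t) = 1 := by
  rw [sum_prod_fn (fun (_ : Fin n) (v : Fin (2 * k) → ZMod 2) => Psym p v)]
  simp [sum_Psym]

lemma Pb_eq {p : ℝ} (i : Fin (2 * k)) (n : ℕ) (u : Fin n → ZMod 2)
    (r : {j : Fin (2 * k) // j ≠ i} → Fin n → ZMod 2) :
    ∏ t, Psym p (Er i n (u, r) t)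
      = (∏ t, bern p (u t)) * (∏ t, Brest p i (fun j => r j t)) := by
  rw [Er_apply, ← Finset.prod_mul_distrib]
  exact Finset.prod_congr rfl fun t _ => Psym_xs i (u t) (fun j => r j t)

lemma sum_Ab {p : ℝ} (i : Fin (2 * k)) (n : ℕ) :
    ∑ r : {j : Fin (2 * k) // j ≠ i} → Fin n → ZMod 2,
      ∏ t, Brest p i (fun j => r j t) = 1 := by
  have h1 := total_one (k := k) n p
  rw [← Equiv.sum_comp (Er i n) (fun x => ∏ t, Psym p (x t)), Fintype.sum_prod_type] at h1
  calc ∑ r : {j : Fin (2 * k) // j ≠ i} → Fin n → ZMod 2, ∏ t, Brest p i (fun j => r j t)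
      = ∑ u : Fin n → ZMod 2, (∏ t, bern p (u t)) *
          ∑ r : {j : Fin (2 * k) // j ≠ i} → Fin n → ZMod 2,
            ∏ t, Brest p i (fun j => r j t) := by
        rw [← Finset.sum_mul, sum_q, one_mul]
    _ = 1 := by
        rw [← h1]
        refine Finset.sum_congr rfl fun u _ => ?_
        rw [Finset.mul_sum]
        exact Finset.sum_congr rfl fun r _ => (Pb_eq i n u r).symm

open Classical in
lemma card_corr (n : ℕ) (M : Fin (2 * k) → ℕ)
    (enc : ∀ i' : Fin (2 * k), (Fin n → ZMod 2) → Fin (M i'))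
    (dec : (∀ i' : Fin (2 * k), Fin (M i')) → (Fin n → ZMod 2))
    (i : Fin (2 * k)) (r : {j : Fin (2 * k) // j ≠ i} → Fin n → ZMod 2) :
    (Finset.univ.filter (fun u : Fin n → ZMod 2 =>
      dec (fun i' => enc i' (fun t => Er i n (u, r) t i'))
        = fun t => ∑ j, Er i n (u, r) t j)).card ≤ M i := by
  have : (Finset.univ.filter (fun u : Fin n → ZMod 2 =>
      dec (fun i' => enc i' (fun t => Er i n (u, r) t i'))
        = fun t => ∑ j, Er i n (u, r) t j)).card ≤ (Finset.univ : Finset (Fin (M i))).card := by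
    apply Finset.card_le_card_of_injOn (fun u => enc i (fun t => Er i n (u, r) t i))
      (fun u _ => Finset.mem_univ _)
    intro u hu u' hu' he
    rw [Finset.coe_filter, Set.mem_setOf_eq] at hu hu'
    -- columns other than i agree
    have hcols : ∀ j : Fin (2 * k), j ≠ i →
        (fun t => Er i n (u, r) t j) = (fun t => Er i n (u', r) t j) := by
      intro j hj
      funext t
      rw [Er_apply, Er_apply]
      show xs i (u t) (fun j' => r j' t) j = xs i (u' t) (fun j' => r j' t) j
      rw [xs, xs, dif_neg hj, dif_neg hj]
    have hmsg : (fun i' => enc i' (fun t => Er i n (u, r) t i'))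
        = (fun i' => enc i' (fun t => Er i n (u', r) t i')) := by
      funext i'
      by_cases h : i' = i
      · subst h; exact he
      · rw [hcols i' h]
    have hz : (fun t => ∑ j, Er i n (u, r) t j) = (fun t => ∑ j, Er i n (u', r) t j) := by
      rw [← hu.2, ← hu'.2, hmsg]
    funext t
    have hzt := congrFun hz t
    have hsplit : ∀ u'' : Fin n → ZMod 2,
        ∑ j, Er i n (u'', r) t j = Er i n (u'', r) t i
          + ∑ j ∈ Finset.univ.erase i, Er i n (u'', r) t j :=
      fun u'' => (Finset.add_sum_erase _ _ (Finset.mem_univ i)).symm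
    rw [hsplit u, hsplit u'] at hzt
    have herase : ∑ j ∈ Finset.univ.erase i, Er i n (u, r) t j
        = ∑ j ∈ Finset.univ.erase i, Er i n (u', r) t j :=
      Finset.sum_congr rfl fun j hj => congrFun (hcols j (Finset.mem_erase.mp hj).1) t
    rw [herase] at hzt
    have hcol := add_right_cancel hzt
    -- column i values equal means u t = u' t
    rw [Er_apply, Er_apply] at hcol
    have h1 : xs i (u t) (fun j' => r j' t) i = u t + r ⟨nbr i, nbr_ne i⟩ t := by
      rw [xs, dif_pos rfl]
    have h2 : xs i (u' t) (fun j' => r j' t) i = u' t + r ⟨nbr i, nbr_ne i⟩ t := by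
      rw [xs, dif_pos rfl]
    have hcol' : xs i (u t) (fun j' => r j' t) i = xs i (u' t) (fun j' => r j' t) i := hcol
    rw [h1, h2] at hcol'
    exact add_right_cancel hcol'
  simpa using this

lemma binH_le_one {p : ℝ} : binH p ≤ 1 := by
  have heq : binH p = Real.binEntropy p / Real.log 2 := by
    unfold binH Real.binEntropy Real.logb
    rw [Real.log_inv, Real.log_inv]
    ring
  rw [heq]
  exact (div_le_one (Real.log_pos one_lt_two)).mpr Real.binEntropy_le_log_two

end St18

open St18

set_option maxHeartbeats 2000000 in
open Classical in
/-- `m = 2k` (even) binary sources `[X1;...;Xm] = L·[Y1;...;Ym]` with `L` the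
lower-triangular all-ones matrix, the `Y i` independent, `Y i ~ Bern(1/2)` for `i` odd
and `Y i ~ Bern(p)` for `i` even (`0 < p < 1/2`); equivalently the joint pmf of the `X i`
is `∏ j, bern (w j) (x j - x (j-1))`. Any achievable rate tuple for distributed lossless
computation of `Z = X1 + ... + Xm (mod 2)` satisfies `R i ≥ h(p)` for every `i`, hence
the sum rate is at least `m·h(p)`. -/
theorem stmt_18 (k : ℕ) (hk : 0 < k) (p : ℝ) (hp : 0 < p) (hp2 : p < 1 / 2) :
    ∀ R : Fin (2 * k) → ℝ,
      AchievableRate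
        (fun x : Fin (2 * k) → ZMod 2 =>
          ∏ j : Fin (2 * k),
            bern (if (j : ℕ) % 2 = 0 then 1 / 2 else p)
              (if hj : (j : ℕ) = 0 then x j else x j + x ⟨(j : ℕ) - 1, by omega⟩))
        (fun x : Fin (2 * k) → ZMod 2 => ∑ i, x i) R →
      (∀ i, binH p ≤ R i) ∧ ((2 * k : ℝ) * binH p ≤ ∑ i, R i) := by
  intro R hach
  have hp1 : p < 1 := by linarith
  have key : ∀ i : Fin (2 * k), binH p ≤ R i := by
    intro i
    have key' : ∀ δ : ℝ, 0 < δ → binH p ≤ R i + δ := by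
      intro δ hδ
      set d : ℝ := δ / 3 with hd_def
      have hd : 0 < d := by positivity
      set N : ℕ := ⌈max (4 * Vr p / d ^ 2) (1 / d)⌉₊ + 1 with hN_def
      have hN1 : 4 * Vr p / d ^ 2 ≤ N := by
        calc 4 * Vr p / d ^ 2 ≤ max (4 * Vr p / d ^ 2) (1 / d) := le_max_left _ _
          _ ≤ ⌈max (4 * Vr p / d ^ 2) (1 / d)⌉₊ := Nat.le_ceil _
          _ ≤ N := by rw [hN_def]; push_cast; linarith
      have hN2 : 1 / d ≤ N := by
        calc 1 / d ≤ max (4 * Vr p / d ^ 2) (1 / d) := le_max_right _ _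
          _ ≤ ⌈max (4 * Vr p / d ^ 2) (1 / d)⌉₊ := Nat.le_ceil _
          _ ≤ N := by rw [hN_def]; push_cast; linarith
      set ε : ℝ := min (1 / 4 : ℝ) (p ^ (2 * k * N) / 2) with hε_def
      have hε : 0 < ε := lt_min (by norm_num) (by positivity)
      obtain ⟨n, hn, M, hM, enc, dec, herr⟩ := hach d hd ε hε
      have hnR : (0 : ℝ) < n := by exact_mod_cast hn
      -- rewrite the error bound in terms of Psym
      have herr' : (∑ x ∈ Finset.univ.filter
          (fun x : Fin n → (Fin (2 * k) → ZMod 2) =>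
            ¬ (dec (fun i' => enc i' (fun t => x t i')) = fun t => ∑ j, x t j)),
          ∏ t, Psym p (x t)) ≤ ε := by
        refine le_trans (le_of_eq (Finset.sum_congr ?_ (fun _ _ => rfl))) herr
        ext x
        simp only [Finset.mem_filter, ne_eq]
      have hCorr : 1 - ε ≤ ∑ x ∈ Finset.univ.filter
          (fun x : Fin n → (Fin (2 * k) → ZMod 2) =>
            dec (fun i' => enc i' (fun t => x t i')) = fun t => ∑ j, x t j),
          ∏ t, Psym p (x t) := by
        have hsum := Finset.sum_filter_add_sum_filter_not (Finset.univ)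
          (fun x : Fin n → (Fin (2 * k) → ZMod 2) =>
            dec (fun i' => enc i' (fun t => x t i')) = fun t => ∑ j, x t j)
          (fun x => ∏ t, Psym p (x t))
        rw [total_one n p] at hsum
        have hglue : (∑ x ∈ Finset.univ.filter
            (fun x : Fin n → (Fin (2 * k) → ZMod 2) =>
              ¬ (dec (fun i' => enc i' (fun t => x t i')) = fun t => ∑ j, x t j)),
            ∏ t, Psym p (x t))
            = ∑ x ∈ Finset.univ.filter
              (fun x : Fin n → (Fin (2 * k) → ZMod 2) =>
                ¬ ((fun x : Fin n → (Fin (2 * k) → ZMod 2) =>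
                  dec (fun i' => enc i' (fun t => x t i')) = fun t => ∑ j, x t j) x)),
              ∏ t, Psym p (x t) := by
          refine Finset.sum_congr ?_ (fun _ _ => rfl)
          ext x
          simp only [Finset.mem_filter]
        rw [hglue] at herr'
        linarith
      by_cases hcase : n ≤ N
      · -- perfect decoding branch
        have hall : ∀ x : Fin n → Fin (2 * k) → ZMod 2,
            dec (fun i' => enc i' (fun t => x t i')) = fun t => ∑ j, x t j := by
          intro x
          by_contra hbad
          have hmem : x ∈ Finset.univ.filter
              (fun x : Fin n → (Fin (2 * k) → ZMod 2) =>
                ¬ (dec (fun i' => enc i' (fun t => x t i')) = fun t => ∑ j, x t j)) :=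
            Finset.mem_filter.mpr ⟨Finset.mem_univ _, hbad⟩
          have hle : ∏ t, Psym p (x t) ≤ ε :=
            le_trans (Finset.single_le_sum (f := fun y : Fin n → Fin (2 * k) → ZMod 2 => ∏ t, Psym p (y t))
              (fun y _ => Finset.prod_nonneg fun t _ => Psym_nonneg hp.le hp1.le (y t)) hmem)
              herr'
          have hge : p ^ (2 * k * n) ≤ ∏ t, Psym p (x t) := by
            calc p ^ (2 * k * n) = ∏ _t : Fin n, p ^ (2 * k) := by
                  rw [Finset.prod_const, Finset.card_univ, Fintype.card_fin, ← pow_mul]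
              _ ≤ ∏ t, Psym p (x t) :=
                  Finset.prod_le_prod (fun t _ => pow_nonneg hp.le _)
                    (fun t _ => Psym_ge hp hp2 (x t))
          have hlt : ε < p ^ (2 * k * n) := by
            calc ε ≤ p ^ (2 * k * N) / 2 := min_le_right _ _
              _ < p ^ (2 * k * N) := half_lt_self (by positivity)
              _ ≤ p ^ (2 * k * n) :=
                  pow_le_pow_of_le_one hp.le hp1.le (by exact Nat.mul_le_mul_left _ hcase)
          linarith
        have hfull : (Finset.univ.filter (fun u : Fin n → ZMod 2 =>
            dec (fun i' => enc i' (fun t => Er i n (u, fun _ _ => 0) t i'))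
              = fun t => ∑ j, Er i n (u, fun _ _ => 0) t j)) = Finset.univ :=
          Finset.filter_true_of_mem (fun u _ => hall _)
        have hcard := card_corr n M enc dec i (fun _ _ => 0)
        rw [hfull] at hcard
        have h2n : 2 ^ n ≤ M i := by
          calc 2 ^ n = Fintype.card (Fin n → ZMod 2) := by
                rw [Fintype.card_fun, Fintype.card_fin, ZMod.card]
            _ = (Finset.univ : Finset (Fin n → ZMod 2)).card := Finset.card_univ.symm
            _ ≤ M i := hcard
        have hlogb : (n : ℝ) ≤ Real.logb 2 (M i) := by
          calc (n : ℝ) = Real.logb 2 ((2 : ℝ) ^ n) := by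
                rw [Real.logb_pow, Real.logb_self_eq_one (by norm_num), mul_one]
            _ ≤ Real.logb 2 (M i) := Real.logb_le_logb_of_le (by norm_num)
                (by positivity) (by exact_mod_cast h2n)
        have h1 : (1 : ℝ) ≤ Real.logb 2 (M i) / n := by
          rw [le_div_iff₀ hnR, one_mul]; exact hlogb
        have := hM i
        have : binH p ≤ R i + d := le_trans binH_le_one (le_trans h1 (hM i))
        linarith
      · -- large blocklength branch
        push_neg at hcase
        have hnN : (N : ℝ) < n := by exact_mod_cast hcase
        set E : ℝ := (n : ℝ) * binH p - (n : ℝ) * d with hE_def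
        set θ : ℝ := (2 : ℝ) ^ (-E) with hθ_def
        have hθpos : 0 < θ := Real.rpow_pos_of_pos (by norm_num) _
        have hqθ : ∀ u : Fin n → ZMod 2,
            ¬ (∑ t, fb p (u t) ≤ (n : ℝ) * binH p - (n : ℝ) * d) →
            (∏ t, bern p (u t)) ≤ θ := by
          intro u hu
          push_neg at hu
          rw [q_eq_rpow hp hp1 u, hθ_def]
          exact (Real.rpow_le_rpow_left_iff (by norm_num)).mpr (by rw [hE_def]; linarith)
        -- bound the correct mass for each fixed rest r
        have hqnn : ∀ u : Fin n → ZMod 2, 0 ≤ ∏ t, bern p (u t) :=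
          fun u => Finset.prod_nonneg fun t _ => (bern_pos hp hp1 _).le
        have hstep : ∀ r : {j : Fin (2 * k) // j ≠ i} → Fin n → ZMod 2,
            ∑ u ∈ Finset.univ.filter (fun u : Fin n → ZMod 2 =>
              dec (fun i' => enc i' (fun t => Er i n (u, r) t i'))
                = fun t => ∑ j, Er i n (u, r) t j),
              ∏ t, bern p (u t)
            ≤ (M i : ℝ) * θ + Vr p / (n * d ^ 2) := by
          intro r
          set Sr := Finset.univ.filter (fun u : Fin n → ZMod 2 =>
            dec (fun i' => enc i' (fun t => Er i n (u, r) t i'))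
              = fun t => ∑ j, Er i n (u, r) t j) with hSr_def
          set Hi := Finset.univ.filter (fun u : Fin n → ZMod 2 =>
            ∑ t, fb p (u t) ≤ (n : ℝ) * binH p - (n : ℝ) * d) with hHi_def
          have hsplit : ∑ u ∈ Sr, ∏ t, bern p (u t)
              = (∑ u ∈ Sr \ Hi, ∏ t, bern p (u t)) + ∑ u ∈ Sr ∩ Hi, ∏ t, bern p (u t) := by
            rw [← Finset.sum_union (Finset.disjoint_sdiff_inter Sr Hi),
              Finset.sdiff_union_inter]
          have hb1 : ∑ u ∈ Sr \ Hi, ∏ t, bern p (u t) ≤ (M i : ℝ) * θ := by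
            calc ∑ u ∈ Sr \ Hi, ∏ t, bern p (u t) ≤ (Sr \ Hi).card • θ :=
                  Finset.sum_le_card_nsmul _ _ _ (fun u hu => by
                    have := (Finset.mem_sdiff.mp hu).2
                    rw [hHi_def, Finset.mem_filter] at this
                    exact hqθ u (fun hc => this ⟨Finset.mem_univ _, hc⟩))
              _ = ((Sr \ Hi).card : ℝ) * θ := nsmul_eq_mul _ _
              _ ≤ (M i : ℝ) * θ := by
                  apply mul_le_mul_of_nonneg_right _ hθpos.le
                  have hc1 : (Sr \ Hi).card ≤ Sr.card :=
                    Finset.card_le_card (Finset.sdiff_subset)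
                  have hc2 : Sr.card ≤ M i := card_corr n M enc dec i r
                  exact_mod_cast le_trans hc1 hc2
          have hb2 : ∑ u ∈ Sr ∩ Hi, ∏ t, bern p (u t) ≤ Vr p / (n * d ^ 2) := by
            calc ∑ u ∈ Sr ∩ Hi, ∏ t, bern p (u t) ≤ ∑ u ∈ Hi, ∏ t, bern p (u t) :=
                  Finset.sum_le_sum_of_subset_of_nonneg (Finset.inter_subset_right)
                    (fun u _ _ => hqnn u)
              _ ≤ Vr p / (n * d ^ 2) := cheb hp hp1 hn hd
          linarith
        -- assemble: 1 - ε ≤ M i * θ + V/(n d²)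
        have hmain : 1 - ε ≤ (M i : ℝ) * θ + Vr p / (n * d ^ 2) := by
          have h1 : ∑ x ∈ Finset.univ.filter
              (fun x : Fin n → (Fin (2 * k) → ZMod 2) =>
                dec (fun i' => enc i' (fun t => x t i')) = fun t => ∑ j, x t j),
              ∏ t, Psym p (x t)
              ≤ (M i : ℝ) * θ + Vr p / (n * d ^ 2) := by
            rw [Finset.sum_filter, ← Equiv.sum_comp (Er i n)
              (fun x => if dec (fun i' => enc i' (fun t => x t i')) = fun t => ∑ j, x t j
                then ∏ t, Psym p (x t) else 0), Fintype.sum_prod_type, Finset.sum_comm]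
            calc ∑ r : {j : Fin (2 * k) // j ≠ i} → Fin n → ZMod 2, ∑ u : Fin n → ZMod 2,
                  (if dec (fun i' => enc i' (fun t => Er i n (u, r) t i'))
                      = fun t => ∑ j, Er i n (u, r) t j
                    then ∏ t, Psym p (Er i n (u, r) t) else 0)
                = ∑ r : {j : Fin (2 * k) // j ≠ i} → Fin n → ZMod 2,
                    (∑ u ∈ Finset.univ.filter (fun u : Fin n → ZMod 2 =>
                      dec (fun i' => enc i' (fun t => Er i n (u, r) t i'))
                        = fun t => ∑ j, Er i n (u, r) t j),
                      ∏ t, bern p (u t)) * (∏ t, Brest p i (fun j => r j t)) := by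
                  refine Finset.sum_congr rfl fun r _ => ?_
                  rw [Finset.sum_filter, Finset.sum_mul]
                  refine Finset.sum_congr rfl fun u _ => ?_
                  rw [ite_mul, zero_mul]
                  by_cases hcond : dec (fun i' => enc i' (fun t => Er i n (u, r) t i'))
                      = fun t => ∑ j, Er i n (u, r) t j
                  · rw [if_pos hcond, if_pos hcond, Pb_eq]
                  · rw [if_neg hcond, if_neg hcond]
              _ ≤ ∑ r : {j : Fin (2 * k) // j ≠ i} → Fin n → ZMod 2,
                    ((M i : ℝ) * θ + Vr p / (n * d ^ 2)) * (∏ t, Brest p i (fun j => r j t)) := by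
                  refine Finset.sum_le_sum fun r _ => ?_
                  apply mul_le_mul_of_nonneg_right (hstep r)
                  exact Finset.prod_nonneg fun t _ => Brest_nonneg hp.le hp1.le i _
              _ = (M i : ℝ) * θ + Vr p / (n * d ^ 2) := by
                  rw [← Finset.mul_sum, sum_Ab, mul_one]
          linarith
        -- conclude
        have hε14 : ε ≤ 1 / 4 := min_le_left _ _
        have hV4 : Vr p / (n * d ^ 2) ≤ 1 / 4 := by
          have h4 : 4 * Vr p ≤ (N : ℝ) * d ^ 2 :=
            (div_le_iff₀ (by positivity : (0:ℝ) < d ^ 2)).mp hN1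
          rw [div_le_iff₀ (by positivity : (0:ℝ) < (n : ℝ) * d ^ 2)]
          nlinarith [sq_nonneg d, hnN]
        have hMθ : 1 / 2 ≤ (M i : ℝ) * θ := by linarith
        have hMipos : (0 : ℝ) < M i := by
          by_contra hcon
          push_neg at hcon
          nlinarith [hθpos, hMθ]
        have h2E : (0 : ℝ) < (2 : ℝ) ^ E := Real.rpow_pos_of_pos (by norm_num) _
        have hEM : (2 : ℝ) ^ E ≤ 2 * (M i : ℝ) := by
          have hθinv : θ = ((2 : ℝ) ^ E)⁻¹ := by
            rw [hθ_def, Real.rpow_neg (by norm_num)]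
          rw [hθinv] at hMθ
          rw [← mul_le_mul_iff_left₀ (inv_pos.mpr h2E)]
          calc (2 : ℝ) ^ E * ((2 : ℝ) ^ E)⁻¹ = 1 := mul_inv_cancel₀ h2E.ne'
            _ ≤ 2 * ((M i : ℝ) * ((2 : ℝ) ^ E)⁻¹) := by linarith
            _ = 2 * (M i : ℝ) * ((2 : ℝ) ^ E)⁻¹ := by ring
        have hlogE : E - 1 ≤ Real.logb 2 (M i) := by
          have := Real.logb_le_logb_of_le (by norm_num : (1:ℝ) < 2) h2E hEM
          rw [Real.logb_rpow (by norm_num) (by norm_num),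
            Real.logb_mul (by norm_num) (by positivity)] at this
          have h22 : Real.logb 2 2 = 1 := Real.logb_self_eq_one (by norm_num)
          rw [h22] at this
          linarith
        have hinv : 1 / (n : ℝ) ≤ d := by
          rw [div_le_iff₀ hnR]
          have : 1 / d ≤ (n : ℝ) := le_trans hN2 (le_of_lt hnN)
          rw [div_le_iff₀ hd] at this
          linarith
        have hdiv : (E - 1) / (n : ℝ) ≤ Real.logb 2 (M i) / n :=
          (div_le_div_iff_of_pos_right hnR).mpr hlogE
        have hE_div : (E - 1) / (n : ℝ) = binH p - d - 1 / n := by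
          rw [hE_def]
          field_simp
        have hfin : binH p - d - 1 / n ≤ R i + d := by
          rw [← hE_div]
          exact le_trans hdiv (hM i)
        have h3d : 3 * d = δ := by rw [hd_def]; ring
        linarith
    by_contra hcon
    push_neg at hcon
    have := key' ((binH p - R i) / 2) (by linarith)
    linarith
  refine ⟨key, ?_⟩
  calc (2 * k : ℝ) * binH p = ∑ _i : Fin (2 * k), binH p := by
        rw [Finset.sum_const, Finset.card_univ, Fintype.card_fin, nsmul_eq_mul]
        push_cast; ring
    _ ≤ ∑ i, R i := Finset.sum_le_sum fun i _ => key i
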